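/- Let ε ∈ (0, 1/3], let c = (c_1,…,c_q) ∈ [−1+3ε, 1−3ε]^q, and let c′ := π_{ε/(q+1)}(c) be the metric projection of c onto (ε/(q+1))·P^{q−1}. Suppose c′ ∈ relint((ε/(q+1))·τ_J) for an ordered partition J = (J_1,…,J_s) of {1,…,q}. Then the numbers t_k := c_j − c′_j for j ∈ J_k are well-defined (independent of the choice of j ∈ J_k), and they satisfy −1 + ε/2 < t_1 ≤ t_2 ≤ … ≤ t_s < 1 − ε/2. -/

import Mathlib

open Set Pointwise

noncomputable section

/-- The vertex `P_ρ` of the permutohedron: the point whose `ρ(k)`-th coordinate is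
`k − (q+1)/2` (with `k` running through `1,…,q`, here 0-indexed as `Fin q`). -/
def vertexPoint (q : ℕ) (ρ : Equiv.Perm (Fin q)) : EuclideanSpace ℝ (Fin q) :=
  WithLp.toLp 2 (fun i => ((ρ.symm i : ℕ) + 1 : ℝ) - ((q : ℝ) + 1) / 2)

/-- The permutohedron `P^{q−1} ⊂ ℝ^q`: the convex hull of the points `P_ρ`. -/
def permutohedron (q : ℕ) : Set (EuclideanSpace ℝ (Fin q)) :=
  convexHull ℝ (Set.range (vertexPoint q))

/-- An ordered partition `J = (J_1,…,J_s)` of `{1,…,q}` into `s` nonempty subsets. -/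
structure OrderedPartition (q s : ℕ) where
  blocks : Fin s → Finset (Fin q)
  nonempty : ∀ k, (blocks k).Nonempty
  disjoint : ∀ k l, k ≠ l → Disjoint (blocks k) (blocks l)
  covers : ∀ j : Fin q, ∃ k, j ∈ blocks k

/-- `cumCard J n = r_n`, the total cardinality of the first `n` blocks. -/
def cumCard {q s : ℕ} (J : OrderedPartition q s) (n : ℕ) : ℕ :=
  ∑ i ∈ Finset.univ.filter (fun i : Fin s => (i : ℕ) < n), (J.blocks i).card

/-- A permutation `π` is compatible with the ordered partition `J` if it maps the
`k`-th consecutive block `{r_{k−1}+1,…,r_k}` (0-indexed: `[r_{k−1}, r_k)`) onto `J_k`;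
these are exactly the permutations `σρ` with `σ` in the Young subgroup. -/
def compatiblePerm {q s : ℕ} (J : OrderedPartition q s) (π : Equiv.Perm (Fin q)) : Prop :=
  ∀ (k : Fin s) (i : Fin q),
    π i ∈ J.blocks k ↔ cumCard J (k : ℕ) ≤ (i : ℕ) ∧ (i : ℕ) < cumCard J ((k : ℕ) + 1)

/-- The face `τ_J` of the permutohedron corresponding to the ordered partition `J`. -/
def face (q s : ℕ) (J : OrderedPartition q s) : Set (EuclideanSpace ℝ (Fin q)) :=
  convexHull ℝ {x | ∃ π : Equiv.Perm (Fin q), compatiblePerm J π ∧ x = vertexPoint q π}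

/-- The metric projection onto a set `K`: a point of `K` at minimal distance
(unique when `K` is compact, convex and nonempty in Euclidean space). -/
def metricProj {E : Type*} [MetricSpace E] [Nonempty E] (K : Set E) (c : E) : E :=
  Classical.epsilon fun y => y ∈ K ∧ ∀ z ∈ K, dist c y ≤ dist c z


namespace OrderedPartition

variable {q s : ℕ} (J : OrderedPartition q s)

lemma cumCard_mono : Monotone (cumCard J) := by
  intro m n h
  apply Finset.sum_le_sum_of_subset
  intro i hi
  simp only [Finset.mem_filter, Finset.mem_univ, true_and] at *
  omega

lemma cumCard_succ (k : Fin s) :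
    cumCard J ((k : ℕ) + 1) = cumCard J (k : ℕ) + (J.blocks k).card := by
  unfold cumCard
  have h : Finset.univ.filter (fun i : Fin s => (i : ℕ) < (k : ℕ) + 1)
      = insert k (Finset.univ.filter (fun i : Fin s => (i : ℕ) < (k : ℕ))) := by
    ext i
    simp only [Finset.mem_filter, Finset.mem_univ, true_and, Finset.mem_insert, Fin.ext_iff]
    omega
  rw [h, Finset.sum_insert (by simp)]
  omega

lemma cumCard_le (n : ℕ) : cumCard J n ≤ q := by
  have h2 : Finset.univ.biUnion J.blocks = (Finset.univ : Finset (Fin q)) := by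
    ext j
    simpa using J.covers j
  calc cumCard J n ≤ ∑ i : Fin s, (J.blocks i).card :=
        Finset.sum_le_sum_of_subset (Finset.filter_subset _ _)
    _ = q := by
        rw [← Finset.card_biUnion (fun k _ l _ hkl => J.disjoint k l hkl), h2,
          Finset.card_univ, Fintype.card_fin]

lemma inInt_unique {k l : Fin s} {i : ℕ}
    (hk1 : cumCard J (k : ℕ) ≤ i) (hk2 : i < cumCard J ((k : ℕ) + 1))
    (hl1 : cumCard J (l : ℕ) ≤ i) (hl2 : i < cumCard J ((l : ℕ) + 1)) : k = l := by
  by_contra h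
  rcases lt_or_gt_of_ne (fun hv => h (Fin.ext hv) : (k : ℕ) ≠ (l : ℕ)) with hlt | hlt
  · have := J.cumCard_mono (show (k : ℕ) + 1 ≤ (l : ℕ) from hlt)
    omega
  · have := J.cumCard_mono (show (l : ℕ) + 1 ≤ (k : ℕ) from hlt)
    omega

def blockOf (j : Fin q) : Fin s := (J.covers j).choose

lemma mem_blockOf (j : Fin q) : j ∈ J.blocks (J.blockOf j) := (J.covers j).choose_spec

lemma blockOf_eq {j : Fin q} {k : Fin s} (h : j ∈ J.blocks k) : J.blockOf j = k := by
  by_contra hne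
  exact Finset.disjoint_left.mp (J.disjoint _ _ hne) (J.mem_blockOf j) h

def pos (j : Fin q) : ℕ :=
  cumCard J (J.blockOf j : ℕ) + ((J.blocks (J.blockOf j)).filter (fun x => x < j)).card

lemma pos_lt_next (j : Fin q) : J.pos j < cumCard J ((J.blockOf j : ℕ) + 1) := by
  rw [J.cumCard_succ]
  have h : ((J.blocks (J.blockOf j)).filter (fun x => x < j)).card
      < (J.blocks (J.blockOf j)).card := by
    apply Finset.card_lt_card
    rw [Finset.filter_ssubset]
    exact ⟨j, J.mem_blockOf j, lt_irrefl j⟩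
  unfold pos
  omega

lemma pos_ge (j : Fin q) : cumCard J (J.blockOf j : ℕ) ≤ J.pos j := Nat.le_add_right _ _

lemma pos_lt (j : Fin q) : J.pos j < q := lt_of_lt_of_le (J.pos_lt_next j) (J.cumCard_le _)

lemma pos_strict_same {j j' : Fin q} (hb : J.blockOf j = J.blockOf j') (hlt : j < j') :
    J.pos j < J.pos j' := by
  unfold pos
  rw [hb]
  have hsub : (J.blocks (J.blockOf j')).filter (fun x => x < j)
      ⊆ (J.blocks (J.blockOf j')).filter (fun x => x < j') := by
    intro x hx
    rw [Finset.mem_filter] at *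
    exact ⟨hx.1, lt_trans hx.2 hlt⟩
  have h : (J.blocks (J.blockOf j')).filter (fun x => x < j)
      ⊂ (J.blocks (J.blockOf j')).filter (fun x => x < j') := by
    rw [Finset.ssubset_iff_of_subset hsub]
    exact ⟨j, Finset.mem_filter.mpr ⟨hb ▸ J.mem_blockOf j, hlt⟩,
      fun hc => absurd (Finset.mem_filter.mp hc).2 (lt_irrefl j)⟩
  have := Finset.card_lt_card h
  omega

lemma pos_strict_diff {j j' : Fin q} (hb : J.blockOf j < J.blockOf j') :
    J.pos j < J.pos j' :=
  lt_of_lt_of_le (J.pos_lt_next j)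
    (le_trans (J.cumCard_mono (show (J.blockOf j : ℕ) + 1 ≤ (J.blockOf j' : ℕ) from hb))
      (J.pos_ge j'))

lemma pos_inj : Function.Injective J.pos := by
  intro j j' h
  by_contra hne
  rcases lt_trichotomy (J.blockOf j) (J.blockOf j') with hb | hb | hb
  · exact absurd h (J.pos_strict_diff hb).ne
  · rcases lt_or_gt_of_ne hne with hj | hj
    · exact absurd h (J.pos_strict_same hb hj).ne
    · exact absurd h.symm (J.pos_strict_same hb.symm hj).ne
  · exact absurd h.symm (J.pos_strict_diff hb).ne

def thePermAux : Fin q → Fin q := fun j => ⟨J.pos j, J.pos_lt j⟩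

def thePerm : Equiv.Perm (Fin q) :=
  (Equiv.ofBijective J.thePermAux
    (Finite.injective_iff_bijective.mp
      (fun a b hab => J.pos_inj (congrArg Fin.val hab)))).symm

lemma thePermAux_thePerm (i : Fin q) : J.thePermAux (J.thePerm i) = i :=
  Equiv.ofBijective_apply_symm_apply _ _ i

lemma thePerm_compatible : compatiblePerm J J.thePerm := by
  intro k i
  set j := J.thePerm i with hj
  have hij : J.pos j = (i : ℕ) := congrArg Fin.val (J.thePermAux_thePerm i)
  constructor
  · intro hjk
    have hbk : J.blockOf j = k := J.blockOf_eq hjk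
    rw [← hij]
    exact ⟨hbk ▸ J.pos_ge j, hbk ▸ J.pos_lt_next j⟩
  · rintro ⟨h1, h2⟩
    have hk : k = J.blockOf j :=
      J.inInt_unique h1 h2 (hij ▸ J.pos_ge j) (hij ▸ J.pos_lt_next j)
    exact hk ▸ J.mem_blockOf j

lemma compatible_mul_swap {π : Equiv.Perm (Fin q)} (hπ : compatiblePerm J π)
    {i i' : Fin q} {k : Fin s}
    (h1 : cumCard J (k : ℕ) ≤ (i : ℕ) ∧ (i : ℕ) < cumCard J ((k : ℕ) + 1))
    (h2 : cumCard J (k : ℕ) ≤ (i' : ℕ) ∧ (i' : ℕ) < cumCard J ((k : ℕ) + 1)) :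
    compatiblePerm J (π * Equiv.swap i i') := by
  intro l m
  have base := hπ l
  show π (Equiv.swap i i' m) ∈ _ ↔ _
  rcases eq_or_ne m i with rfl | hmi
  · rw [Equiv.swap_apply_left, base i']
    constructor
    · rintro ⟨a, b⟩
      have : l = k := J.inInt_unique a b h2.1 h2.2
      subst this; exact h1
    · rintro ⟨a, b⟩
      have : l = k := J.inInt_unique a b h1.1 h1.2
      subst this; exact h2
  rcases eq_or_ne m i' with rfl | hmi'
  · rw [Equiv.swap_apply_right, base i]
    constructor
    · rintro ⟨a, b⟩
      have : l = k := J.inInt_unique a b h1.1 h1.2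
      subst this; exact h2
    · rintro ⟨a, b⟩
      have : l = k := J.inInt_unique a b h2.1 h2.2
      subst this; exact h1
  · rw [Equiv.swap_apply_of_ne_of_ne hmi hmi', base m]

end OrderedPartition

lemma sum_swap_diff {q : ℕ} (y a : Fin q → ℝ) (π : Equiv.Perm (Fin q)) (i i' : Fin q) :
    (∑ m, y (π m) * a m) - (∑ m, y ((π * Equiv.swap i i') m) * a m)
      = (a i - a i') * (y (π i) - y (π i')) := by
  rcases eq_or_ne i i' with rfl | hne
  · simp [Equiv.swap_self]
  · have key : (∑ m, y ((π * Equiv.swap i i') m) * a m)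
        = ∑ m, y (π m) * a (Equiv.swap i i' m) := by
      rw [← Equiv.sum_comp (Equiv.swap i i') (fun m => y (π m) * a (Equiv.swap i i' m))]
      exact Finset.sum_congr rfl fun m _ => by
        simp [Equiv.Perm.mul_apply, Equiv.swap_apply_self]
    rw [key, ← Finset.sum_sub_distrib]
    have hz : ∀ m ∈ Finset.univ, m ∉ ({i, i'} : Finset (Fin q)) →
        y (π m) * a m - y (π m) * a (Equiv.swap i i' m) = 0 := by
      intro m _ hm
      simp only [Finset.mem_insert, Finset.mem_singleton, not_or] at hm
      rw [Equiv.swap_apply_of_ne_of_ne hm.1 hm.2, sub_self]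
    rw [← Finset.sum_subset (Finset.subset_univ ({i, i'} : Finset (Fin q))) hz,
      Finset.sum_pair hne, Equiv.swap_apply_left, Equiv.swap_apply_right]
    ring

/-- for `ε ∈ (0, 1/3]` and `c ∈ [−1+3ε, 1−3ε]^q`, if the metric projection
`c′ = π_{ε/(q+1)}(c)` onto `(ε/(q+1))·P^{q−1}` lies in the relative interior of
`(ε/(q+1))·τ_J`, then the numbers `t_k := c_j − c′_j` (`j ∈ J_k`) are well defined and
satisfy `−1 + ε/2 < t_1 ≤ … ≤ t_s < 1 − ε/2`. -/
theorem metricProj_differences_bounds (q s : ℕ) (hq : 1 ≤ q)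
    (ε : ℝ) (hε : ε ∈ Set.Ioc (0 : ℝ) (1 / 3))
    (c : EuclideanSpace ℝ (Fin q))
    (hc : ∀ i : Fin q, c i ∈ Set.Icc (-1 + 3 * ε) (1 - 3 * ε))
    (J : OrderedPartition q s)
    (c' : EuclideanSpace ℝ (Fin q))
    (hc' : c' = metricProj ((ε / ((q : ℝ) + 1)) • permutohedron q) c)
    (hrel : c' ∈ intrinsicInterior ℝ ((ε / ((q : ℝ) + 1)) • face q s J)) :
    ∃ t : Fin s → ℝ, Monotone t ∧
      (∀ k : Fin s, ∀ j ∈ J.blocks k, c j - c' j = t k) ∧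
      (∀ k : Fin s, -1 + ε / 2 < t k ∧ t k < 1 - ε / 2) := by
  obtain ⟨hε0, hε3⟩ := hε
  set κ : ℝ := ε / ((q : ℝ) + 1) with hκdef
  have hq1 : (0 : ℝ) < (q : ℝ) + 1 := by positivity
  have hκ : 0 < κ := div_pos hε0 hq1
  set K : Set (EuclideanSpace ℝ (Fin q)) := κ • permutohedron q with hKdef
  have hKconv : Convex ℝ K := (convex_convexHull ℝ _).smul κ
  have hKcomp : IsCompact K :=
    ((Set.finite_range (vertexPoint q)).isCompact_convexHull (𝕜 := ℝ)).smul κ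
  have hKne : K.Nonempty :=
    ⟨κ • vertexPoint q 1, Set.smul_mem_smul_set (subset_convexHull ℝ _ ⟨1, rfl⟩)⟩
  -- c' is a minimizer
  have hmin : c' ∈ K ∧ ∀ z ∈ K, dist c c' ≤ dist c z := by
    rw [hc']
    exact Classical.epsilon_spec (p := fun y => y ∈ K ∧ ∀ z ∈ K, dist c y ≤ dist c z)
      (by
        obtain ⟨v, hv, hvmin⟩ := hKcomp.exists_isMinOn hKne
          ((continuous_const.dist continuous_id).continuousOn (s := K))
        exact ⟨v, hv, fun z hz => hvmin hz⟩)
  -- variational inequality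
  haveI : Nonempty ↑K := hKne.to_subtype
  have hbdd : BddBelow (Set.range fun w : K => ‖c - (w : EuclideanSpace ℝ (Fin q))‖) := by
    refine ⟨0, ?_⟩
    rintro x ⟨w, rfl⟩
    exact norm_nonneg _
  have heq : ‖c - c'‖ = ⨅ w : K, ‖c - (w : EuclideanSpace ℝ (Fin q))‖ := by
    apply le_antisymm
    · apply le_ciInf
      intro w
      simpa [dist_eq_norm] using hmin.2 w w.2
    · exact ciInf_le hbdd (⟨c', hmin.1⟩ : K)
  have hproj := (norm_eq_iInf_iff_real_inner_le_zero hKconv hmin.1).mp heq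
  -- the scaled face sits inside K
  have hfaceK : κ • face q s J ⊆ K :=
    Set.smul_set_mono (convexHull_mono (fun x hx => by
      obtain ⟨π, _, hxe⟩ := hx
      exact ⟨π, hxe.symm⟩))
  -- on the scaled face the inner product is zero
  have hzero : ∀ w ∈ κ • face q s J, (inner ℝ (c - c') (w - c') : ℝ) = 0 := by
    intro w hw
    refine le_antisymm (hproj w (hfaceK hw)) ?_
    obtain ⟨x, hx_int, hx_eq⟩ := mem_intrinsicInterior.mp hrel
    set S : Set (EuclideanSpace ℝ (Fin q)) := κ • face q s J with hSdef
    have hwspan : w ∈ affineSpan ℝ S := subset_affineSpan ℝ S hw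
    have hc'S : c' ∈ S := intrinsicInterior_subset hrel
    have hc'span : c' ∈ affineSpan ℝ S := subset_affineSpan ℝ S hc'S
    -- extract a neighborhood
    rw [mem_interior_iff_mem_nhds, nhds_induced, Filter.mem_comap] at hx_int
    obtain ⟨V, hV, hVsub⟩ := hx_int
    rw [hx_eq] at hV
    -- the line through c' and w, inside the affine span
    have hline : ∀ t : ℝ, c' + t • (w - c') ∈ affineSpan ℝ S := by
      intro t
      have := AffineSubspace.smul_vsub_vadd_mem (affineSpan ℝ S) t hwspan hc'span hc'span
      simpa [vsub_eq_sub, vadd_eq_add, add_comm] using this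
    have hcont : Continuous (fun t : ℝ => c' + t • (w - c')) :=
      continuous_const.add (continuous_id.smul continuous_const)
    have hnhds : (fun t : ℝ => c' + t • (w - c')) ⁻¹' V ∈ nhds (0 : ℝ) :=
      hcont.continuousAt.preimage_mem_nhds (by simpa using hV)
    obtain ⟨r, hr0, hball⟩ := Metric.mem_nhds_iff.mp hnhds
    set t0 : ℝ := -(r / 2) with ht0
    have ht0mem : c' + t0 • (w - c') ∈ V := by
      apply hball
      simp only [Metric.mem_ball, dist_zero_right, Real.norm_eq_abs, ht0]
      rw [abs_neg, abs_of_pos (by linarith)]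
      linarith
    have htS : c' + t0 • (w - c') ∈ S := by
      have : (⟨c' + t0 • (w - c'), hline t0⟩ : affineSpan ℝ S) ∈ (Subtype.val ⁻¹' V : Set (affineSpan ℝ S)) := ht0mem
      exact hVsub this
    have hle := hproj _ (hfaceK htS)
    have : (inner ℝ (c - c') ((c' + t0 • (w - c')) - c') : ℝ) = t0 * inner ℝ (c - c') (w - c') := by
      rw [add_sub_cancel_left, real_inner_smul_right]
    rw [this] at hle
    by_contra hneg
    push_neg at hneg
    have h2 : 0 < t0 * (inner ℝ (c - c') (w - c') : ℝ) := by
      rw [ht0]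
      exact mul_pos_of_neg_of_neg (by linarith) hneg
    linarith
  -- the key quantities
  set yv : Fin q → ℝ := fun j => c j - c' j with hyv
  set aq : Fin q → ℝ := fun m => ((m : ℕ) : ℝ) + 1 - ((q : ℝ) + 1) / 2 with haq
  have hinner : ∀ π : Equiv.Perm (Fin q),
      (inner ℝ (c - c') (vertexPoint q π) : ℝ) = ∑ m, yv (π m) * aq m := by
    intro π
    have h1 : (inner ℝ (c - c') (vertexPoint q π) : ℝ) = ∑ i, yv i * aq (π.symm i) := by
      rw [PiLp.inner_apply]
      apply Finset.sum_congr rfl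
      intro i _
      simp [RCLike.inner_apply, PiLp.sub_apply, vertexPoint, hyv, haq, mul_comm]
    rw [h1, ← Equiv.sum_comp π (fun i => yv i * aq (π.symm i))]
    exact Finset.sum_congr rfl fun m _ => by simp
  have hG : ∀ π' π : Equiv.Perm (Fin q), compatiblePerm J π →
      (∑ m, yv (π' m) * aq m) ≤ ∑ m, yv (π m) * aq m := by
    intro π' π hcompat
    have hle' := hproj (κ • vertexPoint q π')
      (Set.smul_mem_smul_set (subset_convexHull ℝ _ ⟨π', rfl⟩))
    have hmemface : vertexPoint q π ∈ face q s J :=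
      subset_convexHull ℝ _ ⟨π, hcompat, rfl⟩
    have heq' := hzero (κ • vertexPoint q π) (Set.smul_mem_smul_set hmemface)
    rw [inner_sub_right, sub_nonpos, real_inner_smul_right] at hle'
    rw [inner_sub_right, sub_eq_zero, real_inner_smul_right] at heq'
    have hkk : κ * (inner ℝ (c - c') (vertexPoint q π') : ℝ)
        ≤ κ * (inner ℝ (c - c') (vertexPoint q π) : ℝ) := by
      rw [heq']; exact hle'
    have hfin := (mul_le_mul_iff_right₀ hκ).mp hkk
    rwa [hinner, hinner] at hfin
  -- combinatorics
  set π₀ := J.thePerm with hπ₀def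
  have hπ₀ := J.thePerm_compatible
  have hint : ∀ (k : Fin s) (j : Fin q), j ∈ J.blocks k →
      cumCard J (k : ℕ) ≤ ((π₀.symm j : Fin q) : ℕ) ∧
        ((π₀.symm j : Fin q) : ℕ) < cumCard J ((k : ℕ) + 1) := by
    intro k j hj
    exact (hπ₀ k (π₀.symm j)).mp (by rwa [Equiv.apply_symm_apply])
  have hW : ∀ (k : Fin s) (j j' : Fin q), j ∈ J.blocks k → j' ∈ J.blocks k →
      yv j = yv j' := by
    intro k j j' hj hj'
    rcases eq_or_ne j j' with rfl | hne
    · rfl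
    set i := π₀.symm j with hi
    set i' := π₀.symm j' with hi'
    have hii : i ≠ i' := fun h => hne (by
      have := congrArg π₀ h
      rwa [hi, hi', Equiv.apply_symm_apply, Equiv.apply_symm_apply] at this)
    have hcomp1 := J.compatible_mul_swap hπ₀ (hint k j hj) (hint k j' hj')
    have h1 := hG (π₀ * Equiv.swap i i') π₀ hπ₀
    have h2 := hG π₀ (π₀ * Equiv.swap i i') hcomp1
    have hdiff := sum_swap_diff yv aq π₀ i i'
    have hz : (aq i - aq i') * (yv (π₀ i) - yv (π₀ i')) = 0 := by
      rw [← hdiff]; linarith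
    have haqne : aq i - aq i' ≠ 0 := by
      simp only [haq]
      intro hcon
      apply hii
      have hcast : ((i : ℕ) : ℝ) = ((i' : ℕ) : ℝ) := by linarith
      exact Fin.ext (Nat.cast_injective hcast)
    have hz2 := (mul_eq_zero.mp hz).resolve_left haqne
    have heq2 : yv (π₀ i) = yv (π₀ i') := by linarith
    rwa [hi, hi', Equiv.apply_symm_apply, Equiv.apply_symm_apply] at heq2
  have hM : ∀ (k l : Fin s), k < l → ∀ (j j' : Fin q), j ∈ J.blocks k →
      j' ∈ J.blocks l → yv j ≤ yv j' := by
    intro k l hkl j j' hj hj'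
    set i := π₀.symm j with hi
    set i' := π₀.symm j' with hi'
    have hIk := hint k j hj
    have hIl := hint l j' hj'
    have hlt : (i : ℕ) < (i' : ℕ) := by
      have := J.cumCard_mono (show (k : ℕ) + 1 ≤ (l : ℕ) from hkl)
      omega
    have h1 := hG (π₀ * Equiv.swap i i') π₀ hπ₀
    have hdiff := sum_swap_diff yv aq π₀ i i'
    have hneg : aq i - aq i' < 0 := by
      simp only [haq]
      have : ((i : ℕ) : ℝ) < ((i' : ℕ) : ℝ) := Nat.cast_lt.mpr hlt
      linarith
    have hprod : 0 ≤ (aq i - aq i') * (yv (π₀ i) - yv (π₀ i')) := by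
      rw [← hdiff]; linarith
    have hle2 : yv (π₀ i) - yv (π₀ i') ≤ 0 := by
      by_contra hcon
      push_neg at hcon
      have := mul_neg_of_neg_of_pos hneg hcon
      linarith
    rw [hi, hi', Equiv.apply_symm_apply, Equiv.apply_symm_apply] at hle2
    linarith
  -- coordinate bounds for c'
  have hc'bound : ∀ i : Fin q, |c' i| ≤ ε / 2 := by
    intro i
    obtain ⟨p, hp, hpe⟩ := hmin.1
    have hpi : p i ∈ Set.Icc (-(((q : ℝ) + 1) / 2)) (((q : ℝ) + 1) / 2) := by
      have hsub : permutohedron q ⊆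
          {x : EuclideanSpace ℝ (Fin q) |
            x i ∈ Set.Icc (-(((q : ℝ) + 1) / 2)) (((q : ℝ) + 1) / 2)} := by
        apply convexHull_min
        · rintro x ⟨π, rfl⟩
          have hv1 : ((π.symm i : ℕ) : ℝ) + 1 ≤ (q : ℝ) := by
            exact_mod_cast Nat.succ_le_of_lt (π.symm i).isLt
          have hv0 : (0 : ℝ) ≤ ((π.symm i : ℕ) : ℝ) := Nat.cast_nonneg _
          constructor
          · show -(((q : ℝ) + 1) / 2) ≤ ((π.symm i : ℕ) : ℝ) + 1 - ((q : ℝ) + 1) / 2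
            linarith
          · show ((π.symm i : ℕ) : ℝ) + 1 - ((q : ℝ) + 1) / 2 ≤ ((q : ℝ) + 1) / 2
            linarith
        · exact (convex_Icc _ _).is_linear_preimage
            ⟨fun a b => rfl, fun r a => rfl⟩
      exact hsub hp
    rw [← hpe]
    show |(κ • p) i| ≤ ε / 2
    have happ : (κ • p) i = κ * p i := rfl
    rw [happ, abs_mul, abs_of_pos hκ]
    have habs : |p i| ≤ ((q : ℝ) + 1) / 2 := abs_le.mpr ⟨hpi.1, hpi.2⟩
    calc κ * |p i| ≤ κ * (((q : ℝ) + 1) / 2) :=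
          mul_le_mul_of_nonneg_left habs hκ.le
      _ = ε / 2 := by
          rw [hκdef]
          field_simp
  -- assemble
  refine ⟨fun k => yv (J.nonempty k).choose, ?_, ?_, ?_⟩
  · intro k l hkl
    rcases eq_or_lt_of_le hkl with heq | hlt
    · exact le_of_eq (by rw [heq])
    · exact hM k l hlt _ _ (J.nonempty k).choose_spec (J.nonempty l).choose_spec
  · intro k j hj
    exact hW k j _ hj (J.nonempty k).choose_spec
  · intro k
    have hjmem := (J.nonempty k).choose_spec
    set j := (J.nonempty k).choose
    have hyvj : yv j = c j - c' j := rfl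
    obtain ⟨h1, h2⟩ := hc j
    obtain ⟨hl, hr⟩ := abs_le.mp (hc'bound j)
    constructor
    · show -1 + ε / 2 < yv j
      rw [hyvj]; linarith
    · show yv j < 1 - ε / 2
      rw [hyvj]; linarith
end
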